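/- Let (X, π) be a finite set with a partition, let X^eq be the union of blocks of maximal cardinality and X^neq its complement, and suppose δ₁|X^eq| ≤ |X^neq| ≤ δ₂|X^eq| with δ₁ ≤ δ₂ ≤ ε(δ₁ + 1) for reals δ₁, δ₂, ε ≥ 0. Then for any permutation α of X, the set D of microstates where entropy strictly decreases satisfies |D| ≤ ε|X|. -/

import Mathlib

open Finset

/-- If the equilibrium (union of blocks of maximal size) dominates,
`δ₁|X^eq| ≤ |X^neq| ≤ δ₂|X^eq|` with `δ₁ ≤ δ₂ ≤ ε(δ₁+1)`, then any permutation
has at most `ε|X|` microstates of strictly decreasing entropy. -/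
theorem stmt4 {X A : Type*} [Fintype X] [DecidableEq X] [DecidableEq A]
    (f : X → A) (hf : Function.Surjective f)
    (blk : X → ℕ) (hblk : ∀ i, blk i = (univ.filter (fun j => f j = f i)).card)
    (Xeq : Finset X) (hXeq : Xeq = univ.filter (fun i => ∀ j, blk j ≤ blk i))
    (δ₁ δ₂ ε : ℝ) (hδ₁ : 0 ≤ δ₁) (hε : 0 ≤ ε)
    (h12 : δ₁ ≤ δ₂) (h2e : δ₂ ≤ ε * (δ₁ + 1))
    (hlow : δ₁ * Xeq.card ≤ ((Xeqᶜ).card : ℝ))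
    (hhigh : ((Xeqᶜ).card : ℝ) ≤ δ₂ * Xeq.card)
    (α : X ≃ X) :
    ((univ.filter (fun i => blk (α i) < blk i)).card : ℝ) ≤ ε * Fintype.card X := by
  have hD : (univ.filter (fun i => blk (α i) < blk i)).card ≤ (Xeqᶜ).card := by
    apply Finset.card_le_card_of_injOn (fun i => α i)
    · intro i hi
      simp only [mem_coe, mem_filter, mem_univ, true_and] at hi
      simp only [mem_coe, mem_compl, hXeq, mem_filter, mem_univ, true_and, not_forall]
      exact ⟨i, not_le.2 hi⟩
    · intro a _ b _ h
      exact α.injective h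
  have hcard : (Xeq.card : ℝ) + (Xeqᶜ).card = Fintype.card X := by
    rw [← Nat.cast_add, Finset.card_add_card_compl]
  have h1 : ((univ.filter (fun i => blk (α i) < blk i)).card : ℝ) ≤ (Xeqᶜ).card := by
    exact_mod_cast hD
  have h2 : (Xeqᶜ.card : ℝ) ≤ ε * (δ₁ + 1) * Xeq.card :=
    hhigh.trans (by
      apply mul_le_mul_of_nonneg_right h2e
      exact Nat.cast_nonneg _)
  have h3 : ε * (δ₁ + 1) * Xeq.card ≤ ε * Fintype.card X := by
    rw [← hcard]
    have : (δ₁ + 1) * Xeq.card ≤ Xeq.card + Xeqᶜ.card := by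
      have := hlow
      ring_nf
      nlinarith
    nlinarith
  linarith
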